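/- Let β∈(0,1], let φ,ℓ be integrable on (0,∞) and let ξ be measurable on (0,∞) with ‖ξ‖_{L_1^{0,β}} = ∫₀^∞ |ξ(v)| K₀(βv) dv < ∞. Define h = φ⋆ξ and f(x) = h(x) − (ℓ ∗_{F_c} h)(x) for x>0. Then f is integrable on (0,∞) and ‖f‖_{L_1(0,∞)} ≤ 2·‖φ‖_{L_1(0,∞)}·‖ξ‖_{L_1^{0,β}}·(1 + 2√(2/π)·‖ℓ‖_{L_1(0,∞)}). -/

import Mathlib

open MeasureTheory Real Set

/-- The kernel function φ(x,u,v). -/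
noncomputable def phiKer (x u v : ℝ) : ℝ :=
  Real.exp (-v * Real.cosh (x + u - 1)) + Real.exp (-v * Real.cosh (x - u + 1))
    - Real.exp (-v * Real.cosh (x + u + 1)) - Real.exp (-v * Real.cosh (x - u - 1))

/-- The modified Bessel function of the second kind of order zero. -/
noncomputable def K0 (v : ℝ) : ℝ := ∫ t in Set.Ioi (0 : ℝ), Real.exp (-v * Real.cosh t)

/-- The trigonometric-weighted generalized convolution (f ⋆ g). -/
noncomputable def gconv (f g : ℝ → ℝ) (x : ℝ) : ℝ :=
  (1 / 4) * ∫ v in Set.Ioi (0 : ℝ), ∫ u in Set.Ioi (0 : ℝ), phiKer x u v * f u * g v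

/-- Fourier cosine transform. -/
noncomputable def Fc (f : ℝ → ℝ) (y : ℝ) : ℝ :=
  Real.sqrt (2 / Real.pi) * ∫ x in Set.Ioi (0 : ℝ), f x * Real.cos (x * y)

/-- Fourier sine transform. -/
noncomputable def Fs (f : ℝ → ℝ) (y : ℝ) : ℝ :=
  Real.sqrt (2 / Real.pi) * ∫ x in Set.Ioi (0 : ℝ), f x * Real.sin (x * y)

/-- Modified Bessel function K_{iy}(x). -/
noncomputable def Kiy (y x : ℝ) : ℝ :=
  ∫ u in Set.Ioi (0 : ℝ), Real.exp (-x * Real.cosh u) * Real.cos (y * u)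

/-- Kontorovich–Lebedev transform. -/
noncomputable def KL (g : ℝ → ℝ) (y : ℝ) : ℝ := ∫ x in Set.Ioi (0 : ℝ), Kiy y x * g x

/-- Fourier cosine convolution. -/
noncomputable def fcConv (f g : ℝ → ℝ) (x : ℝ) : ℝ :=
  (1 / Real.sqrt (2 * Real.pi)) * ∫ u in Set.Ioi (0 : ℝ), f u * (g |x - u| + g (x + u))

/-- Fourier sine–cosine generalized convolution. -/
noncomputable def fscConv (f g : ℝ → ℝ) (x : ℝ) : ℝ :=
  (1 / Real.sqrt (2 * Real.pi)) * ∫ u in Set.Ioi (0 : ℝ), f u * (g |x - u| - g (x + u))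

lemma sq_div_eight_le_cosh (t : ℝ) : t ^ 2 / 8 ≤ Real.cosh t := by
  rw [← Real.cosh_abs, ← sq_abs]
  have hs0 : 0 ≤ |t| := abs_nonneg t
  rw [Real.cosh_eq]
  have h1 : |t| / 2 + 1 ≤ Real.exp (|t| / 2) := Real.add_one_le_exp _
  have h2 : Real.exp |t| = Real.exp (|t| / 2) * Real.exp (|t| / 2) := by
    rw [← Real.exp_add]; ring_nf
  have h3 : (0:ℝ) < Real.exp (-|t|) := Real.exp_pos _
  nlinarith [h1, h2, h3, hs0, Real.exp_pos (|t| / 2)]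

lemma integrable_exp_neg_cosh {v : ℝ} (hv : 0 < v) :
    Integrable (fun t : ℝ => Real.exp (-v * Real.cosh t)) := by
  have hg : Integrable (fun t : ℝ => Real.exp (-(v/8) * t ^ 2)) :=
    integrable_exp_neg_mul_sq (by linarith)
  refine hg.mono' ?_ ?_
  · exact (Real.continuous_exp.comp (continuous_const.mul Real.continuous_cosh)).aestronglyMeasurable
  · refine Filter.Eventually.of_forall fun t => ?_
    rw [Real.norm_eq_abs, Real.abs_exp]
    apply Real.exp_le_exp.mpr
    have h := sq_div_eight_le_cosh t
    nlinarith

lemma integrable_exp_neg_cosh_shift {v : ℝ} (hv : 0 < v) (a : ℝ) :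
    Integrable (fun x : ℝ => Real.exp (-v * Real.cosh (x + a))) :=
  (integrable_exp_neg_cosh hv).comp_add_right a

lemma integral_exp_neg_cosh_eq (v : ℝ) :
    (∫ x : ℝ, Real.exp (-v * Real.cosh x)) = 2 * K0 v := by
  have h : (fun x : ℝ => Real.exp (-v * Real.cosh x))
      = fun x : ℝ => Real.exp (-v * Real.cosh |x|) := funext fun x => by rw [Real.cosh_abs]
  rw [h]
  exact integral_comp_abs (f := fun x => Real.exp (-v * Real.cosh x))

lemma setIntegral_exp_neg_cosh_shift_le {v : ℝ} (hv : 0 < v) (a : ℝ) :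
    ∫ x in Set.Ioi (0:ℝ), Real.exp (-v * Real.cosh (x + a)) ≤ 2 * K0 v := by
  have h := integrable_exp_neg_cosh_shift hv a
  calc ∫ x in Set.Ioi (0:ℝ), Real.exp (-v * Real.cosh (x + a))
      ≤ ∫ x : ℝ, Real.exp (-v * Real.cosh (x + a)) :=
        setIntegral_le_integral h (Filter.Eventually.of_forall fun x => (Real.exp_pos _).le)
    _ = ∫ x : ℝ, Real.exp (-v * Real.cosh x) :=
        integral_add_right_eq_self (fun x => Real.exp (-v * Real.cosh x)) a
    _ = 2 * K0 v := integral_exp_neg_cosh_eq v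

lemma K0_nonneg (v : ℝ) : 0 ≤ K0 v :=
  integral_nonneg fun t => (Real.exp_pos _).le

lemma K0_le_K0 {w v : ℝ} (hw : 0 < w) (hwv : w ≤ v) : K0 v ≤ K0 w := by
  have hv : 0 < v := lt_of_lt_of_le hw hwv
  unfold K0
  apply setIntegral_mono ((integrable_exp_neg_cosh hv).integrableOn)
    ((integrable_exp_neg_cosh hw).integrableOn)
  intro t
  apply Real.exp_le_exp.mpr
  have h := Real.one_le_cosh t
  nlinarith

lemma phiKer_eq (x u v : ℝ) : phiKer x u v =
    Real.exp (-v * Real.cosh (x + (u - 1))) + Real.exp (-v * Real.cosh (x + (1 - u)))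
      - Real.exp (-v * Real.cosh (x + (u + 1))) - Real.exp (-v * Real.cosh (x + (-u - 1))) := by
  unfold phiKer
  rw [show x + u - 1 = x + (u - 1) by ring, show x - u + 1 = x + (1 - u) by ring,
     show x + u + 1 = x + (u + 1) by ring, show x - u - 1 = x + (-u - 1) by ring]

lemma integrableOn_phiKer {v : ℝ} (hv : 0 < v) (u : ℝ) :
    IntegrableOn (fun x => phiKer x u v) (Set.Ioi 0) := by
  have h1 := (integrable_exp_neg_cosh_shift hv (u - 1)).integrableOn (s := Set.Ioi 0)
  have h2 := (integrable_exp_neg_cosh_shift hv (1 - u)).integrableOn (s := Set.Ioi 0)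
  have h3 := (integrable_exp_neg_cosh_shift hv (u + 1)).integrableOn (s := Set.Ioi 0)
  have h4 := (integrable_exp_neg_cosh_shift hv (-u - 1)).integrableOn (s := Set.Ioi 0)
  have h : (fun x => phiKer x u v) = fun x =>
      Real.exp (-v * Real.cosh (x + (u - 1))) + Real.exp (-v * Real.cosh (x + (1 - u)))
      - Real.exp (-v * Real.cosh (x + (u + 1))) - Real.exp (-v * Real.cosh (x + (-u - 1))) :=
    funext fun x => phiKer_eq x u v
  rw [h]
  exact ((h1.add h2).sub h3).sub h4

lemma setIntegral_abs_phiKer_le {v : ℝ} (hv : 0 < v) (u : ℝ) :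
    ∫ x in Set.Ioi (0:ℝ), |phiKer x u v| ≤ 8 * K0 v := by
  have h1 := (integrable_exp_neg_cosh_shift hv (u - 1)).integrableOn (s := Set.Ioi 0)
  have h2 := (integrable_exp_neg_cosh_shift hv (1 - u)).integrableOn (s := Set.Ioi 0)
  have h3 := (integrable_exp_neg_cosh_shift hv (u + 1)).integrableOn (s := Set.Ioi 0)
  have h4 := (integrable_exp_neg_cosh_shift hv (-u - 1)).integrableOn (s := Set.Ioi 0)
  have hle : ∀ x : ℝ, |phiKer x u v| ≤
      Real.exp (-v * Real.cosh (x + (u - 1))) + Real.exp (-v * Real.cosh (x + (1 - u)))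
      + Real.exp (-v * Real.cosh (x + (u + 1))) + Real.exp (-v * Real.cosh (x + (-u - 1))) := by
    intro x
    rw [phiKer_eq, abs_le]
    constructor <;>
      nlinarith [Real.exp_pos (-v * Real.cosh (x + (u - 1))),
        Real.exp_pos (-v * Real.cosh (x + (1 - u))),
        Real.exp_pos (-v * Real.cosh (x + (u + 1))),
        Real.exp_pos (-v * Real.cosh (x + (-u - 1)))]
  have b1 := setIntegral_exp_neg_cosh_shift_le hv (u - 1)
  have b2 := setIntegral_exp_neg_cosh_shift_le hv (1 - u)
  have b3 := setIntegral_exp_neg_cosh_shift_le hv (u + 1)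
  have b4 := setIntegral_exp_neg_cosh_shift_le hv (-u - 1)
  calc ∫ x in Set.Ioi (0:ℝ), |phiKer x u v|
      ≤ ∫ x in Set.Ioi (0:ℝ),
          (Real.exp (-v * Real.cosh (x + (u - 1))) + Real.exp (-v * Real.cosh (x + (1 - u)))
          + Real.exp (-v * Real.cosh (x + (u + 1))) + Real.exp (-v * Real.cosh (x + (-u - 1)))) :=
        setIntegral_mono ((integrableOn_phiKer hv u).abs) (((h1.add h2).add h3).add h4) hle
    _ = (∫ x in Set.Ioi (0:ℝ), Real.exp (-v * Real.cosh (x + (u - 1))))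
        + (∫ x in Set.Ioi (0:ℝ), Real.exp (-v * Real.cosh (x + (1 - u))))
        + (∫ x in Set.Ioi (0:ℝ), Real.exp (-v * Real.cosh (x + (u + 1))))
        + (∫ x in Set.Ioi (0:ℝ), Real.exp (-v * Real.cosh (x + (-u - 1)))) := by
        rw [integral_add (f := fun x => Real.exp (-v * Real.cosh (x + (u - 1)))
              + Real.exp (-v * Real.cosh (x + (1 - u))) + Real.exp (-v * Real.cosh (x + (u + 1))))
            (g := fun x => Real.exp (-v * Real.cosh (x + (-u - 1)))) ((h1.add h2).add h3) h4,
           integral_add (f := fun x => Real.exp (-v * Real.cosh (x + (u - 1)))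
              + Real.exp (-v * Real.cosh (x + (1 - u))))
            (g := fun x => Real.exp (-v * Real.cosh (x + (u + 1)))) (h1.add h2) h3,
           integral_add (f := fun x => Real.exp (-v * Real.cosh (x + (u - 1))))
            (g := fun x => Real.exp (-v * Real.cosh (x + (1 - u)))) h1 h2]
    _ ≤ 8 * K0 v := by linarith

lemma my_integrable_comp_abs {g : ℝ → ℝ} (hg : IntegrableOn (fun x => g |x|) (Set.Ioi 0)) :
    Integrable (fun x => g |x|) := by
  have int_Iic : IntegrableOn (fun x ↦ g |x|) (Iic 0) := by
    rw [← Measure.map_neg_eq_self (volume : Measure ℝ)]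
    have m : MeasurableEmbedding fun x : ℝ => -x := (Homeomorph.neg ℝ).measurableEmbedding
    rw [m.integrableOn_map_iff]
    simp_rw [Function.comp_def, abs_neg, neg_preimage, neg_Iic, neg_zero]
    exact Iff.mpr integrableOn_Ici_iff_integrableOn_Ioi hg
  rw [← integrableOn_univ, ← Set.Iic_union_Ioi (a := (0:ℝ))]
  exact int_Iic.union hg

theorem aux_estimate (β : ℝ) (hβ : β ∈ Set.Ioc (0 : ℝ) 1)
    (Φ ℓ ξ : ℝ → ℝ)
    (hΦm : Measurable Φ) (hℓm : Measurable ℓ) (hξm : Measurable ξ)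
    (hΦ : MeasureTheory.IntegrableOn Φ (Set.Ioi 0))
    (hℓ : MeasureTheory.IntegrableOn ℓ (Set.Ioi 0))
    (hξ : MeasureTheory.IntegrableOn (fun v => |ξ v| * K0 (β * v)) (Set.Ioi 0)) :
    MeasureTheory.IntegrableOn
      (fun x => gconv Φ ξ x - fcConv ℓ (gconv Φ ξ) x) (Set.Ioi 0) ∧
    (∫ x in Set.Ioi (0 : ℝ), |gconv Φ ξ x - fcConv ℓ (gconv Φ ξ) x|) ≤
      2 * (∫ x in Set.Ioi (0 : ℝ), |Φ x|) * (∫ v in Set.Ioi (0 : ℝ), |ξ v| * K0 (β * v)) *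
        (1 + 2 * Real.sqrt (2 / Real.pi) * ∫ x in Set.Ioi (0 : ℝ), |ℓ x|) := by
  obtain ⟨hβ0, hβ1⟩ := hβ
  -- notation
  have hK0bound : ∀ p : ℝ × ℝ, p ∈ Set.Ioi (0:ℝ) ×ˢ Set.Ioi (0:ℝ) →
      (∫ x in Set.Ioi (0:ℝ), ‖phiKer x p.2 p.1 * Φ p.2 * ξ p.1‖) ≤
        8 * (|ξ p.1| * K0 (β * p.1)) * |Φ p.2| := by
    rintro ⟨v, u⟩ ⟨hv, hu⟩
    simp only at hv hu ⊢
    have hβv : 0 < β * v := mul_pos hβ0 hv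
    have hK : K0 v ≤ K0 (β * v) := K0_le_K0 hβv (by nlinarith)
    calc (∫ x in Set.Ioi (0:ℝ), ‖phiKer x u v * Φ u * ξ v‖)
        = ∫ x in Set.Ioi (0:ℝ), |phiKer x u v| * (|Φ u| * |ξ v|) := by
          simp only [Real.norm_eq_abs, abs_mul, mul_assoc]
      _ = (∫ x in Set.Ioi (0:ℝ), |phiKer x u v|) * (|Φ u| * |ξ v|) :=
          integral_mul_const _ _
      _ ≤ (8 * K0 (β * v)) * (|Φ u| * |ξ v|) := by
          apply mul_le_mul_of_nonneg_right _ (mul_nonneg (abs_nonneg _) (abs_nonneg _))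
          calc (∫ x in Set.Ioi (0:ℝ), |phiKer x u v|) ≤ 8 * K0 v :=
                setIntegral_abs_phiKer_le hv u
            _ ≤ 8 * K0 (β * v) := by linarith
      _ = 8 * (|ξ v| * K0 (β * v)) * |Φ u| := by ring
  have hmF : AEStronglyMeasurable (fun q : (ℝ × ℝ) × ℝ => phiKer q.2 q.1.2 q.1.1 * Φ q.1.2 * ξ q.1.1)
      (((volume.restrict (Set.Ioi 0)).prod (volume.restrict (Set.Ioi 0))).prod
        (volume.restrict (Set.Ioi 0))) := by
    apply Measurable.aestronglyMeasurable
    have hc : Continuous fun q : (ℝ × ℝ) × ℝ => phiKer q.2 q.1.2 q.1.1 := by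
      unfold phiKer; fun_prop
    exact (hc.measurable.mul (hΦm.comp (measurable_fst.snd))).mul (hξm.comp (measurable_fst.fst))
  have haeP : ∀ᵐ p ∂((volume.restrict (Set.Ioi (0:ℝ))).prod (volume.restrict (Set.Ioi (0:ℝ)))),
      p ∈ Set.Ioi (0:ℝ) ×ˢ Set.Ioi (0:ℝ) := by
    rw [Measure.prod_restrict]
    exact ae_restrict_mem (measurableSet_Ioi.prod measurableSet_Ioi)
  have hF : Integrable (fun q : (ℝ × ℝ) × ℝ => phiKer q.2 q.1.2 q.1.1 * Φ q.1.2 * ξ q.1.1)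
      (((volume.restrict (Set.Ioi 0)).prod (volume.restrict (Set.Ioi 0))).prod
        (volume.restrict (Set.Ioi 0))) := by
    rw [integrable_prod_iff hmF]
    constructor
    · filter_upwards [haeP] with p hp
      exact ((integrableOn_phiKer hp.1 p.2).mul_const (Φ p.2)).mul_const (ξ p.1)
    · apply Integrable.mono' ((hξ.const_mul 8).mul_prod hΦ.abs) (hmF.norm.integral_prod_right')
      filter_upwards [haeP] with p hp
      rw [Real.norm_eq_abs, abs_of_nonneg (integral_nonneg fun x => norm_nonneg _)]
      exact hK0bound p hp
  have haeh : gconv Φ ξ =ᵐ[volume.restrict (Set.Ioi 0)] fun x => (1/4) *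
      ∫ p, (phiKer x p.2 p.1 * Φ p.2 * ξ p.1)
        ∂((volume.restrict (Set.Ioi 0)).prod (volume.restrict (Set.Ioi 0))) := by
    filter_upwards [hF.prod_left_ae] with x hx
    unfold gconv
    congr 1
    rw [integral_prod _ hx]
  have hhInt : IntegrableOn (gconv Φ ξ) (Set.Ioi 0) :=
    Integrable.congr ((hF.integral_prod_right).const_mul (1/4)) haeh.symm
  have hS : (∫ x in Set.Ioi (0:ℝ), |gconv Φ ξ x|) ≤
      2 * (∫ x in Set.Ioi (0 : ℝ), |Φ x|) * (∫ v in Set.Ioi (0 : ℝ), |ξ v| * K0 (β * v)) := by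
    calc (∫ x in Set.Ioi (0:ℝ), |gconv Φ ξ x|)
        = ∫ x in Set.Ioi (0:ℝ), |(1/4) * (∫ p, (phiKer x p.2 p.1 * Φ p.2 * ξ p.1)
            ∂((volume.restrict (Set.Ioi 0)).prod (volume.restrict (Set.Ioi 0))))| :=
          integral_congr_ae (haeh.mono fun x hx => congrArg (fun t => |t|) hx)
      _ ≤ ∫ x in Set.Ioi (0:ℝ), (1/4) * (∫ p, ‖phiKer x p.2 p.1 * Φ p.2 * ξ p.1‖
            ∂((volume.restrict (Set.Ioi 0)).prod (volume.restrict (Set.Ioi 0)))) := by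
          apply integral_mono ((hF.integral_prod_right.const_mul (1/4)).abs)
            ((hF.norm.integral_prod_right).const_mul (1/4))
          intro x
          dsimp only
          rw [abs_mul, abs_of_pos (by norm_num : (0:ℝ) < 1/4)]
          apply mul_le_mul_of_nonneg_left _ (by norm_num : (0:ℝ) ≤ 1/4)
          rw [← Real.norm_eq_abs]
          exact norm_integral_le_integral_norm _
      _ = (1/4) * ∫ x in Set.Ioi (0:ℝ), (∫ p, ‖phiKer x p.2 p.1 * Φ p.2 * ξ p.1‖
            ∂((volume.restrict (Set.Ioi 0)).prod (volume.restrict (Set.Ioi 0)))) :=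
          integral_const_mul _ _
      _ = (1/4) * ∫ p, (∫ x in Set.Ioi (0:ℝ), ‖phiKer x p.2 p.1 * Φ p.2 * ξ p.1‖)
            ∂((volume.restrict (Set.Ioi 0)).prod (volume.restrict (Set.Ioi 0))) := by
          congr 1
          exact (integral_integral_swap
            (f := fun (p : ℝ × ℝ) (x : ℝ) => ‖phiKer x p.2 p.1 * Φ p.2 * ξ p.1‖) hF.norm).symm
      _ ≤ (1/4) * ∫ p, (8 * (|ξ p.1| * K0 (β * p.1)) * |Φ p.2|)
            ∂((volume.restrict (Set.Ioi 0)).prod (volume.restrict (Set.Ioi 0))) := by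
          apply mul_le_mul_of_nonneg_left _ (by norm_num : (0:ℝ) ≤ 1/4)
          apply integral_mono_ae hF.integral_norm_prod_left ((hξ.const_mul 8).mul_prod hΦ.abs)
          filter_upwards [haeP] with p hp
          exact hK0bound p hp
      _ = (1/4) * ((∫ v in Set.Ioi (0:ℝ), 8 * (|ξ v| * K0 (β * v)))
            * (∫ u in Set.Ioi (0:ℝ), |Φ u|)) := by
          rw [integral_prod_mul (f := fun v => 8 * (|ξ v| * K0 (β * v))) (g := fun u => |Φ u|)]
      _ = 2 * (∫ x in Set.Ioi (0 : ℝ), |Φ x|) * (∫ v in Set.Ioi (0 : ℝ), |ξ v| * K0 (β * v)) := by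
          rw [integral_const_mul]
          ring
  -- measurability of gconv
  have hhm : Measurable (gconv Φ ξ) := by
    have hc : Continuous fun q : (ℝ × ℝ) × ℝ => phiKer q.1.1 q.2 q.1.2 := by
      unfold phiKer; fun_prop
    have h1 : StronglyMeasurable fun q : (ℝ × ℝ) × ℝ =>
        phiKer q.1.1 q.2 q.1.2 * Φ q.2 * ξ q.1.2 :=
      ((hc.measurable.mul (hΦm.comp measurable_snd)).mul
        (hξm.comp measurable_fst.snd)).stronglyMeasurable
    have h2 : StronglyMeasurable fun q : ℝ × ℝ =>
        ∫ u in Set.Ioi (0:ℝ), phiKer q.1 u q.2 * Φ u * ξ q.2 :=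
      h1.integral_prod_right'
    have h4 : StronglyMeasurable fun x : ℝ =>
        ∫ v in Set.Ioi (0:ℝ), ∫ u in Set.Ioi (0:ℝ), phiKer x u v * Φ u * ξ v :=
      h2.integral_prod_right'
    unfold gconv
    exact measurable_const.mul h4.measurable
  set S : ℝ := ∫ x in Set.Ioi (0:ℝ), |gconv Φ ξ x| with hSdef
  have hS0 : 0 ≤ S := integral_nonneg fun x => abs_nonneg _
  have hH : Integrable (fun t : ℝ => gconv Φ ξ |t|) := by
    apply my_integrable_comp_abs (g := gconv Φ ξ)
    apply hhInt.congr
    filter_upwards [ae_restrict_mem measurableSet_Ioi] with x hx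
    rw [abs_of_pos hx]
  have hHabs : Integrable (fun t : ℝ => |gconv Φ ξ (|t|)|) := by
    apply my_integrable_comp_abs (g := fun t => |gconv Φ ξ t|)
    apply hhInt.abs.congr
    filter_upwards [ae_restrict_mem measurableSet_Ioi] with x hx
    rw [abs_of_pos (show (0:ℝ) < x from hx)]
  have hb1 : ∀ u : ℝ, ∫ x in Set.Ioi (0:ℝ), |gconv Φ ξ (|x - u|)| ≤ 2 * S := by
    intro u
    calc ∫ x in Set.Ioi (0:ℝ), |gconv Φ ξ (|x - u|)|
        ≤ ∫ x : ℝ, |gconv Φ ξ (|x - u|)| :=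
          setIntegral_le_integral (hHabs.comp_sub_right u)
            (Filter.Eventually.of_forall fun x => abs_nonneg _)
      _ = ∫ x : ℝ, |gconv Φ ξ (|x|)| :=
          integral_sub_right_eq_self (fun t => |gconv Φ ξ (|t|)|) u
      _ = 2 * S := integral_comp_abs (f := fun x => |gconv Φ ξ x|)
  have hb2 : ∀ u : ℝ, 0 < u →
      IntegrableOn (fun x => gconv Φ ξ (x + u)) (Set.Ioi 0) ∧
      ∫ x in Set.Ioi (0:ℝ), |gconv Φ ξ (x + u)| ≤ S := by
    intro u hu
    have hpre : (fun x : ℝ => x + u) ⁻¹' (Set.Ioi u) = Set.Ioi 0 := by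
      ext x; simp [Set.mem_Ioi]
    have hmp := measurePreserving_add_right (volume : Measure ℝ) u
    have hemb : MeasurableEmbedding (fun x : ℝ => x + u) :=
      (Homeomorph.addRight u).measurableEmbedding
    constructor
    · have h := hmp.integrableOn_comp_preimage hemb (f := gconv Φ ξ) (s := Set.Ioi u)
      rw [hpre] at h
      exact h.mpr (hhInt.mono_set (Set.Ioi_subset_Ioi hu.le))
    · have heq := hmp.setIntegral_preimage_emb hemb (fun x => |gconv Φ ξ x|) (Set.Ioi u)
      rw [hpre] at heq
      rw [show (∫ x in Set.Ioi (0:ℝ), |gconv Φ ξ (x + u)|)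
          = ∫ x in Set.Ioi u, |gconv Φ ξ x| from heq]
      exact setIntegral_mono_set hhInt.abs
        (Filter.Eventually.of_forall fun x => abs_nonneg _)
        (HasSubset.Subset.eventuallyLE (Set.Ioi_subset_Ioi hu.le))
  have aeGbound : ∀ᵐ u ∂(volume.restrict (Set.Ioi (0:ℝ))),
      (∫ x in Set.Ioi (0:ℝ), ‖ℓ u * (gconv Φ ξ |x - u| + gconv Φ ξ (x + u))‖)
        ≤ |ℓ u| * (3 * S) := by
    filter_upwards [ae_restrict_mem measurableSet_Ioi] with u hu
    have hi1 : IntegrableOn (fun x => gconv Φ ξ |x - u|) (Set.Ioi 0) :=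
      (hH.comp_sub_right u).integrableOn
    have hi2 := (hb2 u hu).1
    calc (∫ x in Set.Ioi (0:ℝ), ‖ℓ u * (gconv Φ ξ |x - u| + gconv Φ ξ (x + u))‖)
        ≤ ∫ x in Set.Ioi (0:ℝ), |ℓ u| * (|gconv Φ ξ (|x - u|)| + |gconv Φ ξ (x + u)|) := by
          apply setIntegral_mono (((hi1.add hi2).const_mul (ℓ u)).norm)
            ((hi1.abs.add hi2.abs).const_mul |ℓ u|)
          intro x
          simp only [Pi.add_apply]
          rw [Real.norm_eq_abs, abs_mul]
          exact mul_le_mul_of_nonneg_left (abs_add_le _ _) (abs_nonneg _)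
      _ = |ℓ u| * ((∫ x in Set.Ioi (0:ℝ), |gconv Φ ξ (|x - u|)|)
            + ∫ x in Set.Ioi (0:ℝ), |gconv Φ ξ (x + u)|) := by
          rw [integral_const_mul, integral_add hi1.abs hi2.abs]
      _ ≤ |ℓ u| * (2 * S + S) := by
          apply mul_le_mul_of_nonneg_left _ (abs_nonneg _)
          have h1 := hb1 u
          have h2 := (hb2 u hu).2
          linarith
      _ = |ℓ u| * (3 * S) := by ring
  have hGm : AEStronglyMeasurable
      (fun q : ℝ × ℝ => ℓ q.1 * (gconv Φ ξ |q.2 - q.1| + gconv Φ ξ (q.2 + q.1)))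
      ((volume.restrict (Set.Ioi 0)).prod (volume.restrict (Set.Ioi 0))) :=
    Measurable.aestronglyMeasurable
      ((hℓm.comp measurable_fst).mul
        ((hhm.comp (measurable_snd.sub measurable_fst).abs).add
          (hhm.comp (measurable_snd.add measurable_fst))))
  have hG : Integrable (fun q : ℝ × ℝ => ℓ q.1 * (gconv Φ ξ |q.2 - q.1| + gconv Φ ξ (q.2 + q.1)))
      ((volume.restrict (Set.Ioi 0)).prod (volume.restrict (Set.Ioi 0))) := by
    rw [integrable_prod_iff hGm]
    constructor
    · filter_upwards [ae_restrict_mem measurableSet_Ioi] with u hu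
      exact (((hH.comp_sub_right u).integrableOn.add (hb2 u hu).1)).const_mul (ℓ u)
    · apply Integrable.mono' (hℓ.abs.mul_const (3 * S)) (hGm.norm.integral_prod_right')
      filter_upwards [aeGbound] with u hbu
      rw [Real.norm_eq_abs, abs_of_nonneg (integral_nonneg fun x => norm_nonneg _)]
      exact hbu
  have hfcEq : fcConv ℓ (gconv Φ ξ) = fun x => (1 / Real.sqrt (2 * Real.pi)) *
      ∫ u in Set.Ioi (0:ℝ), ℓ u * (gconv Φ ξ |x - u| + gconv Φ ξ (x + u)) := rfl
  have hf2Int : IntegrableOn (fcConv ℓ (gconv Φ ξ)) (Set.Ioi 0) := by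
    rw [hfcEq]
    exact hG.integral_prod_right.const_mul _
  have hc : (0:ℝ) < 1 / Real.sqrt (2 * Real.pi) := by positivity
  have hf2Bound : (∫ x in Set.Ioi (0:ℝ), |fcConv ℓ (gconv Φ ξ) x|) ≤
      (1 / Real.sqrt (2 * Real.pi)) * ((∫ x in Set.Ioi (0:ℝ), |ℓ x|) * (3 * S)) := by
    calc (∫ x in Set.Ioi (0:ℝ), |fcConv ℓ (gconv Φ ξ) x|)
        ≤ ∫ x in Set.Ioi (0:ℝ), (1 / Real.sqrt (2 * Real.pi)) *
            (∫ u in Set.Ioi (0:ℝ), ‖ℓ u * (gconv Φ ξ |x - u| + gconv Φ ξ (x + u))‖) := by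
          apply integral_mono hf2Int.abs ((hG.norm.integral_prod_right).const_mul _)
          intro x
          dsimp only
          rw [show fcConv ℓ (gconv Φ ξ) x = (1 / Real.sqrt (2 * Real.pi)) *
            ∫ u in Set.Ioi (0:ℝ), ℓ u * (gconv Φ ξ |x - u| + gconv Φ ξ (x + u)) from rfl]
          rw [abs_mul, abs_of_pos hc]
          apply mul_le_mul_of_nonneg_left _ hc.le
          rw [← Real.norm_eq_abs]
          exact norm_integral_le_integral_norm _
      _ = (1 / Real.sqrt (2 * Real.pi)) * ∫ x in Set.Ioi (0:ℝ),
            (∫ u in Set.Ioi (0:ℝ), ‖ℓ u * (gconv Φ ξ |x - u| + gconv Φ ξ (x + u))‖) :=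
          integral_const_mul _ _
      _ = (1 / Real.sqrt (2 * Real.pi)) * ∫ u in Set.Ioi (0:ℝ),
            (∫ x in Set.Ioi (0:ℝ), ‖ℓ u * (gconv Φ ξ |x - u| + gconv Φ ξ (x + u))‖) := by
          congr 1
          exact (integral_integral_swap
            (f := fun (u : ℝ) (x : ℝ) => ‖ℓ u * (gconv Φ ξ |x - u| + gconv Φ ξ (x + u))‖)
            hG.norm).symm
      _ ≤ (1 / Real.sqrt (2 * Real.pi)) * ∫ u in Set.Ioi (0:ℝ), |ℓ u| * (3 * S) := by
          apply mul_le_mul_of_nonneg_left _ hc.le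
          exact integral_mono_ae hG.integral_norm_prod_left (hℓ.abs.mul_const _) aeGbound
      _ = (1 / Real.sqrt (2 * Real.pi)) * ((∫ x in Set.Ioi (0:ℝ), |ℓ x|) * (3 * S)) := by
          rw [integral_mul_const]
  have hsqrt : 2 * Real.sqrt (2 / Real.pi) = 4 * (1 / Real.sqrt (2 * Real.pi)) := by
    have hπ := Real.pi_pos
    have h2 : (0:ℝ) < Real.sqrt (2 * Real.pi) := Real.sqrt_pos.mpr (by positivity)
    have h1 : Real.sqrt (2 / Real.pi) * Real.sqrt (2 * Real.pi) = 2 := by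
      rw [← Real.sqrt_mul (by positivity)]
      rw [show 2 / Real.pi * (2 * Real.pi) = 4 by field_simp; ring]
      rw [show (4:ℝ) = 2^2 by norm_num, Real.sqrt_sq (by norm_num)]
    rw [show (4:ℝ) * (1 / Real.sqrt (2 * Real.pi)) = 4 / Real.sqrt (2 * Real.pi) by ring,
      eq_div_iff h2.ne']
    rw [mul_assoc, h1]
    norm_num
  constructor
  · exact hhInt.sub hf2Int
  · have htri : (∫ x in Set.Ioi (0:ℝ), |gconv Φ ξ x - fcConv ℓ (gconv Φ ξ) x|) ≤
        S + ∫ x in Set.Ioi (0:ℝ), |fcConv ℓ (gconv Φ ξ) x| := by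
      calc (∫ x in Set.Ioi (0:ℝ), |gconv Φ ξ x - fcConv ℓ (gconv Φ ξ) x|)
          ≤ ∫ x in Set.Ioi (0:ℝ), (|gconv Φ ξ x| + |fcConv ℓ (gconv Φ ξ) x|) :=
            integral_mono ((hhInt.sub hf2Int).abs) (hhInt.abs.add hf2Int.abs)
              (fun x => abs_sub _ _)
        _ = S + ∫ x in Set.Ioi (0:ℝ), |fcConv ℓ (gconv Φ ξ) x| :=
            integral_add hhInt.abs hf2Int.abs
    have hL0 : (0:ℝ) ≤ ∫ x in Set.Ioi (0:ℝ), |ℓ x| := integral_nonneg fun x => abs_nonneg _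
    have key : (1 / Real.sqrt (2 * Real.pi)) * (∫ x in Set.Ioi (0:ℝ), |ℓ x|) * S ≤
        (1 / Real.sqrt (2 * Real.pi)) * (∫ x in Set.Ioi (0:ℝ), |ℓ x|) *
          (2 * (∫ x in Set.Ioi (0 : ℝ), |Φ x|) * (∫ v in Set.Ioi (0 : ℝ), |ξ v| * K0 (β * v))) :=
      mul_le_mul_of_nonneg_left hS (mul_nonneg hc.le hL0)
    have hM0 : (0:ℝ) ≤
        2 * (∫ x in Set.Ioi (0 : ℝ), |Φ x|) * (∫ v in Set.Ioi (0 : ℝ), |ξ v| * K0 (β * v)) :=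
      le_trans hS0 hS
    rw [hsqrt]
    nlinarith [htri, hf2Bound, hS, hS0, hL0, key, hM0, hc.le,
      mul_nonneg (mul_nonneg hc.le hL0) hM0]

theorem second_kind_solution_estimate (β : ℝ) (hβ : β ∈ Set.Ioc (0 : ℝ) 1)
    (Φ ℓ ξ : ℝ → ℝ)
    (hΦ : MeasureTheory.IntegrableOn Φ (Set.Ioi 0))
    (hℓ : MeasureTheory.IntegrableOn ℓ (Set.Ioi 0))
    (hξm : Measurable ξ)
    (hξ : MeasureTheory.IntegrableOn (fun v => |ξ v| * K0 (β * v)) (Set.Ioi 0)) :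
    MeasureTheory.IntegrableOn
      (fun x => gconv Φ ξ x - fcConv ℓ (gconv Φ ξ) x) (Set.Ioi 0) ∧
    (∫ x in Set.Ioi (0 : ℝ), |gconv Φ ξ x - fcConv ℓ (gconv Φ ξ) x|) ≤
      2 * (∫ x in Set.Ioi (0 : ℝ), |Φ x|) * (∫ v in Set.Ioi (0 : ℝ), |ξ v| * K0 (β * v)) *
        (1 + 2 * Real.sqrt (2 / Real.pi) * ∫ x in Set.Ioi (0 : ℝ), |ℓ x|) := by
  have hΦa : AEStronglyMeasurable Φ (volume.restrict (Set.Ioi 0)) := hΦ.1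
  have hℓa : AEStronglyMeasurable ℓ (volume.restrict (Set.Ioi 0)) := hℓ.1
  set Φ' : ℝ → ℝ := hΦa.mk Φ with hΦ'def
  set ℓ' : ℝ → ℝ := hℓa.mk ℓ with hℓ'def
  have hΦ'm : Measurable Φ' := hΦa.stronglyMeasurable_mk.measurable
  have hℓ'm : Measurable ℓ' := hℓa.stronglyMeasurable_mk.measurable
  have hΦeq : Φ =ᵐ[volume.restrict (Set.Ioi 0)] Φ' := hΦa.ae_eq_mk
  have hℓeq : ℓ =ᵐ[volume.restrict (Set.Ioi 0)] ℓ' := hℓa.ae_eq_mk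
  have hΦ' : IntegrableOn Φ' (Set.Ioi 0) := hΦ.congr hΦeq
  have hℓ' : IntegrableOn ℓ' (Set.Ioi 0) := hℓ.congr hℓeq
  have hgeq : gconv Φ ξ = gconv Φ' ξ := by
    funext x
    unfold gconv
    congr 1
    apply integral_congr_ae
    refine Filter.Eventually.of_forall fun v => ?_
    exact integral_congr_ae (hΦeq.mono fun u hu => by dsimp only; rw [hu])
  have hfceq : fcConv ℓ (gconv Φ' ξ) = fcConv ℓ' (gconv Φ' ξ) := by
    funext x
    unfold fcConv
    congr 1
    exact integral_congr_ae (hℓeq.mono fun u hu => by dsimp only; rw [hu])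
  have hΦabs : (∫ x in Set.Ioi (0:ℝ), |Φ x|) = ∫ x in Set.Ioi (0:ℝ), |Φ' x| :=
    integral_congr_ae (hΦeq.mono fun u hu => by dsimp only; rw [hu])
  have hℓabs : (∫ x in Set.Ioi (0:ℝ), |ℓ x|) = ∫ x in Set.Ioi (0:ℝ), |ℓ' x| :=
    integral_congr_ae (hℓeq.mono fun u hu => by dsimp only; rw [hu])
  rw [hgeq, hfceq, hΦabs, hℓabs]
  exact aux_estimate β hβ Φ' ℓ' ξ hΦ'm hℓ'm hξm hΦ' hℓ' hξ
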